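/- Let A ∈ ℝ^{m×n}, b ∈ ℝ^m, μ > 0, β ∈ [0,1), and set σ = μ(1−β) and L = ‖AᵀA‖ + σ. For any step size α with 0 < α < 2/L, the ISTA map f(x) = S_{αμβ}(x − α(Aᵀ(Ax − b) + σx)) is a contraction on Euclidean ℝⁿ with Lipschitz constant max(|1 − ασ|, |1 − αL|) < 1; consequently f has a unique fixed point x⋆, and for any starting point x₀ the fixed-point iterates x_{t+1} = f(x_t) converge to x⋆. -/

import Mathlib

open Matrix
open scoped RealInnerProductSpace

/-- Interpret a plain vector in `Fin k → ℝ` as a point of Euclidean space. -/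
noncomputable def toEuc (k : ℕ) (v : Fin k → ℝ) : EuclideanSpace ℝ (Fin k) :=
  (WithLp.equiv 2 (Fin k → ℝ)).symm v

/-- Coordinatewise shrinkage (soft-thresholding) operator `S_κ` on `ℝⁿ`:
`S_κ(v)_i = sign(v_i) * max (|v_i| - κ) 0`. -/
noncomputable def shrink (n : ℕ) (κ : ℝ) (v : EuclideanSpace ℝ (Fin n)) :
    EuclideanSpace ℝ (Fin n) :=
  WithLp.toLp 2 (fun i => Real.sign (v i) * max (|v i| - κ) 0)

/-- The gradient map `∇q(x) = Aᵀ(Ax − b) + σx` of the smooth part of the elastic net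
objective. -/
noncomputable def quadGrad (m n : ℕ) (A : Matrix (Fin m) (Fin n) ℝ)
    (b : EuclideanSpace ℝ (Fin m)) (σ : ℝ) (x : EuclideanSpace ℝ (Fin n)) :
    EuclideanSpace ℝ (Fin n) :=
  toEuc n (Aᵀ.mulVec (toEuc m (A.mulVec x) - b)) + σ • x

/-- The ISTA fixed-point map `f(x) = S_{αμβ}(x − α(Aᵀ(Ax − b) + μ(1−β)x))` for elastic
net regression. -/
noncomputable def istaMap (m n : ℕ) (A : Matrix (Fin m) (Fin n) ℝ)
    (b : EuclideanSpace ℝ (Fin m)) (μ β α : ℝ) (x : EuclideanSpace ℝ (Fin n)) :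
    EuclideanSpace ℝ (Fin n) :=
  shrink n (α * μ * β) (x - α • quadGrad m n A b (μ * (1 - β)) x)

/-- The operator norm of `AᵀA` as a linear map on Euclidean space. -/
noncomputable def l2OpNormAtA (m n : ℕ) (A : Matrix (Fin m) (Fin n) ℝ) : ℝ :=
  ‖(Matrix.toEuclideanLin (Aᵀ * A)).toContinuousLinearMap‖

-- scalar soft-threshold rewrite
lemma soft_eq (κ x : ℝ) (hκ : 0 ≤ κ) :
    Real.sign x * max (|x| - κ) 0 = x - max (-κ) (min x κ) := by
  rcases lt_trichotomy x 0 with h | h | h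
  · rw [Real.sign_of_neg h, abs_of_neg h, min_eq_left (by linarith)]
    rcases le_total x (-κ) with h2 | h2
    · rw [max_eq_left h2, max_eq_left (by linarith : (0:ℝ) ≤ -x - κ)]; ring
    · rw [max_eq_right h2, max_eq_right (by linarith : -x - κ ≤ 0)]; ring
  · simp [h, min_eq_left hκ, max_eq_right (neg_nonpos.2 hκ)]
  · rw [Real.sign_of_pos h, abs_of_pos h, one_mul]
    rcases le_total x κ with h2 | h2
    · rw [min_eq_left h2, max_eq_right (by linarith : -κ ≤ x),
        max_eq_right (by linarith : x - κ ≤ 0)]; ring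
    · rw [min_eq_right h2, max_eq_right (by linarith : -κ ≤ κ),
        max_eq_left (by linarith : (0:ℝ) ≤ x - κ)]

lemma soft_lip (κ a c : ℝ) (hκ : 0 ≤ κ) :
    |Real.sign a * max (|a| - κ) 0 - Real.sign c * max (|c| - κ) 0| ≤ |a - c| := by
  rw [soft_eq κ a hκ, soft_eq κ c hκ]
  have h1 : max (-κ) (min a κ) - max (-κ) (min c κ) ≤ a - c ∨ True := by
    simp [max_def, min_def]
  rcases le_total c a with h | h
  · have hm1 : max (-κ) (min c κ) ≤ max (-κ) (min a κ) := by
      apply max_le_max le_rfl (min_le_min h le_rfl)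
    have hm2 : max (-κ) (min a κ) - max (-κ) (min c κ) ≤ a - c := by
      rcases le_total a κ with h3 | h3 <;> rcases le_total c κ with h4 | h4 <;>
        rcases le_total (-κ) a with h5 | h5 <;> rcases le_total (-κ) c with h6 | h6 <;>
        simp [max_def, min_def] <;> split_ifs <;> linarith
    rw [abs_of_nonneg (by linarith), abs_of_nonneg (by linarith)]
    linarith
  · have hm1 : max (-κ) (min a κ) ≤ max (-κ) (min c κ) := by
      apply max_le_max le_rfl (min_le_min h le_rfl)
    have hm2 : max (-κ) (min c κ) - max (-κ) (min a κ) ≤ c - a := by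
      rcases le_total a κ with h3 | h3 <;> rcases le_total c κ with h4 | h4 <;>
        rcases le_total (-κ) a with h5 | h5 <;> rcases le_total (-κ) c with h6 | h6 <;>
        simp [max_def, min_def] <;> split_ifs <;> linarith
    rw [abs_of_nonpos (by linarith), abs_of_nonpos (by linarith)]
    linarith

lemma shrink_lip (n : ℕ) (κ : ℝ) (hκ : 0 ≤ κ) (u v : EuclideanSpace ℝ (Fin n)) :
    dist (shrink n κ u) (shrink n κ v) ≤ dist u v := by
  rw [EuclideanSpace.dist_eq, EuclideanSpace.dist_eq]
  apply Real.sqrt_le_sqrt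
  apply Finset.sum_le_sum
  intro i _
  have h : dist (shrink n κ u i) (shrink n κ v i) ≤ dist (u i) (v i) := by
    simpa [Real.dist_eq, shrink] using soft_lip κ (u i) (v i) hκ
  exact pow_le_pow_left₀ dist_nonneg h 2

section test
variable (m n : ℕ) (A : Matrix (Fin m) (Fin n) ℝ)

noncomputable def Bc : EuclideanSpace ℝ (Fin n) →L[ℝ] EuclideanSpace ℝ (Fin m) :=
  LinearMap.toContinuousLinearMap (Matrix.toEuclideanLin A)

lemma hBt : LinearMap.toContinuousLinearMap (Matrix.toEuclideanLin Aᵀ)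
    = ContinuousLinearMap.adjoint (Bc m n A) := by
  rw [← Matrix.conjTranspose_eq_transpose_of_trivial,
    Matrix.toEuclideanLin_conjTranspose_eq_adjoint, LinearMap.adjoint_toContinuousLinearMap]
  rfl

lemma hM : LinearMap.toContinuousLinearMap (Matrix.toEuclideanLin (Aᵀ * A))
    = ContinuousLinearMap.adjoint (Bc m n A) ∘L (Bc m n A) := by
  rw [← hBt]
  refine ContinuousLinearMap.ext fun z => ?_
  show Matrix.toEuclideanLin (Aᵀ * A) z = Matrix.toEuclideanLin Aᵀ (Matrix.toEuclideanLin A z)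
  simp [Matrix.toEuclideanLin_apply, Matrix.mulVec_mulVec]

lemma hBapp (z : EuclideanSpace ℝ (Fin n)) :
    ContinuousLinearMap.adjoint (Bc m n A) (Bc m n A z) = toEuc n (Aᵀ.mulVec (A.mulVec z)) := by
  rw [← hBt]
  rfl
end test

lemma quad_bound (Kv σv αv cv Nv sv tv Wv nb : ℝ)
    (hK : Kv = nb * nb) (hnb : 0 ≤ nb) (hN : 0 ≤ Nv) (hs : 0 ≤ sv) (ht : 0 ≤ tv)
    (hW0 : 0 ≤ Wv) (hts : tv ≤ nb * sv) (hsN : sv ≤ nb * Nv)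
    (hW : Wv^2 = (1-αv*σv)^2*Nv^2 - 2*(αv*(1-αv*σv))*sv^2 + αv^2*tv^2)
    (h1 : (1-αv*σv)^2 ≤ cv^2) (h2 : (1-αv*σv-αv*Kv)^2 ≤ cv^2) (hc : 0 ≤ cv) :
    Wv ≤ cv * Nv := by
  have hK0 : 0 ≤ Kv := by nlinarith
  have ht2 : tv^2 ≤ Kv * sv^2 := by nlinarith
  have hs2 : sv^2 ≤ Kv * Nv^2 := by nlinarith
  have hsq : Wv^2 ≤ (cv*Nv)^2 := by
    rcases eq_or_lt_of_le hK0 with h0 | hKpos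
    · rw [← h0, zero_mul] at ht2 hs2
      have hs0 : sv^2 = 0 := le_antisymm hs2 (sq_nonneg sv)
      have ht0 : tv^2 = 0 := le_antisymm ht2 (sq_nonneg tv)
      rw [hs0, ht0] at hW
      nlinarith [mul_le_mul_of_nonneg_right h1 (sq_nonneg Nv)]
    · have hA : 0 ≤ (Kv*Nv^2 - sv^2) * (cv^2 - (1-αv*σv)^2) :=
        mul_nonneg (by linarith) (by linarith)
      have hB2 : 0 ≤ sv^2 * (cv^2 - (1-αv*σv-αv*Kv)^2) :=
        mul_nonneg (sq_nonneg _) (by linarith)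
      have hprod : (Kv*αv^2)*tv^2 ≤ (Kv*αv^2)*(Kv*sv^2) :=
        mul_le_mul_of_nonneg_left ht2 (mul_nonneg hK0 (sq_nonneg αv))
      have hKmul : Kv * Wv^2 ≤ Kv * (cv*Nv)^2 := by nlinarith
      exact le_of_mul_le_mul_left hKmul hKpos
  nlinarith [mul_nonneg hc hN]

/-- For `μ > 0`, `β ∈ [0,1)`, `σ = μ(1−β)`, `L = ‖AᵀA‖ + σ`, and step size `0 < α < 2/L`,
the ISTA map `f(x) = S_{αμβ}(x − α(Aᵀ(Ax − b) + σx))` is a contraction on Euclidean `ℝⁿ`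
with Lipschitz constant `max (|1 − ασ|) (|1 − αL|) < 1`; consequently `f` has a unique
fixed point `x⋆` and the fixed-point iterates `x_{t+1} = f(x_t)` converge to `x⋆` from
any starting point. -/
theorem ista_contraction_and_convergence (m n : ℕ) (A : Matrix (Fin m) (Fin n) ℝ)
    (b : EuclideanSpace ℝ (Fin m)) (μ β α : ℝ) (hμ : 0 < μ) (hβ0 : 0 ≤ β) (hβ1 : β < 1)
    (hα : 0 < α) (hα2 : α < 2 / (l2OpNormAtA m n A + μ * (1 - β))) :
    LipschitzWith
      (max |1 - α * (μ * (1 - β))| |1 - α * (l2OpNormAtA m n A + μ * (1 - β))|).toNNReal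
      (istaMap m n A b μ β α) ∧
    max |1 - α * (μ * (1 - β))| |1 - α * (l2OpNormAtA m n A + μ * (1 - β))| < 1 ∧
    ∃ xstar : EuclideanSpace ℝ (Fin n),
      istaMap m n A b μ β α xstar = xstar ∧
      (∀ y : EuclideanSpace ℝ (Fin n), istaMap m n A b μ β α y = y → y = xstar) ∧
      (∀ x0 : EuclideanSpace ℝ (Fin n),
        Filter.Tendsto (fun t : ℕ => (istaMap m n A b μ β α)^[t] x0)
          Filter.atTop (nhds xstar)) := by
  set σ := μ * (1 - β) with hσdef
  set K := l2OpNormAtA m n A with hKdef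
  have hσ : 0 < σ := mul_pos hμ (by linarith)
  have hK : 0 ≤ K := norm_nonneg _
  have hL : 0 < K + σ := by linarith
  have hαL : α * (K + σ) < 2 := (lt_div_iff₀ hL).mp hα2
  have hασ : α * σ ≤ α * (K + σ) := by nlinarith
  set c := max |1 - α * σ| |1 - α * (K + σ)| with hcdef
  have hc0 : 0 ≤ c := le_trans (abs_nonneg _) (le_max_left _ _)
  have hc1 : c < 1 := by
    apply max_lt <;> rw [abs_lt] <;> constructor <;> nlinarith [mul_pos hα hσ]
  set B := Bc m n A with hBdef
  have hKB : K = ‖B‖ * ‖B‖ := by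
    rw [hKdef]
    show ‖(Matrix.toEuclideanLin (Aᵀ * A)).toContinuousLinearMap‖ = _
    rw [hM m n A]
    exact ContinuousLinearMap.norm_adjoint_comp_self B
  have haux : ∀ x, istaMap m n A b μ β α x
      = shrink n (α * μ * β) (x - α • quadGrad m n A b σ x) := fun _ => rfl
  clear_value σ K c
  -- key linear contraction bound
  have key : ∀ z : EuclideanSpace ℝ (Fin n),
      ‖z - α • (ContinuousLinearMap.adjoint B (B z) + σ • z)‖ ≤ c * ‖z‖ := by
    intro z
    set w := z - α • (ContinuousLinearMap.adjoint B (B z) + σ • z) with hw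
    have hw2 : w = (1 - α * σ) • z - α • (ContinuousLinearMap.adjoint B (B z)) := by
      rw [hw]; module
    have hinner : (inner ℝ z (ContinuousLinearMap.adjoint B (B z)) : ℝ) = ‖B z‖ ^ 2 := by
      rw [ContinuousLinearMap.adjoint_inner_right]
      exact real_inner_self_eq_norm_sq _
    have hadj : ‖ContinuousLinearMap.adjoint B‖ = ‖B‖ := LinearIsometryEquiv.norm_map _ B
    have hMz : ‖ContinuousLinearMap.adjoint B (B z)‖ ≤ ‖B‖ * ‖B z‖ := by
      calc ‖ContinuousLinearMap.adjoint B (B z)‖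
          ≤ ‖ContinuousLinearMap.adjoint B‖ * ‖B z‖ := ContinuousLinearMap.le_opNorm _ _
        _ = ‖B‖ * ‖B z‖ := by rw [hadj]
    have hBz : ‖B z‖ ≤ ‖B‖ * ‖z‖ := ContinuousLinearMap.le_opNorm _ _
    have hnsq : ‖w‖ ^ 2 = (1 - α*σ)^2 * ‖z‖^2 - 2 * (α * (1 - α*σ)) * ‖B z‖^2
        + α^2 * ‖ContinuousLinearMap.adjoint B (B z)‖^2 := by
      rw [hw2, norm_sub_sq_real, real_inner_smul_left, real_inner_smul_right, hinner,
        norm_smul, norm_smul, Real.norm_eq_abs, Real.norm_eq_abs, mul_pow, mul_pow,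
        sq_abs, sq_abs]
      ring
    have h1 : (1 - α*σ)^2 ≤ c^2 := by
      rw [← sq_abs, hcdef]
      exact pow_le_pow_left₀ (abs_nonneg _) (le_max_left _ _) 2
    have h2 : (1 - α*σ - α*K)^2 ≤ c^2 := by
      rw [show (1-α*σ-α*K)^2 = (1-α*(K+σ))^2 by ring, ← sq_abs, hcdef]
      exact pow_le_pow_left₀ (abs_nonneg _) (le_max_right _ _) 2
    exact quad_bound K σ α c ‖z‖ ‖B z‖ ‖ContinuousLinearMap.adjoint B (B z)‖ ‖w‖ ‖B‖
      hKB (norm_nonneg _) (norm_nonneg _) (norm_nonneg _) (norm_nonneg _) (norm_nonneg _)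
      hMz hBz hnsq h1 h2 hc0
  -- rewrite quadGrad in operator form
  have hquadEq : ∀ x : EuclideanSpace ℝ (Fin n), quadGrad m n A b σ x
      = (ContinuousLinearMap.adjoint B (B x) + σ • x) - toEuc n (Aᵀ.mulVec b) := by
    intro x
    rw [hBapp]
    show toEuc n (Aᵀ.mulVec (toEuc m (A.mulVec x) - b)) + σ • x = _
    have hsub : toEuc n (Aᵀ.mulVec (toEuc m (A.mulVec x) - b))
        = toEuc n (Aᵀ.mulVec (A.mulVec x)) - toEuc n (Aᵀ.mulVec b) := by
      ext i
      simp [toEuc, Matrix.mulVec, dotProduct, Finset.sum_sub_distrib, mul_sub,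
        Matrix.mul_apply, Finset.sum_mul, Matrix.transpose_apply, mul_assoc]
      simp [Finset.mul_sum]
      rw [Finset.sum_comm]
    rw [hsub]; abel
  have hdiff : ∀ x y : EuclideanSpace ℝ (Fin n),
      (x - α • quadGrad m n A b σ x) - (y - α • quadGrad m n A b σ y)
      = (x - y) - α • (ContinuousLinearMap.adjoint B (B (x - y)) + σ • (x - y)) := by
    intro x y
    rw [hquadEq x, hquadEq y, map_sub B, map_sub (ContinuousLinearMap.adjoint B)]
    module
  have hd : ∀ x y, dist (istaMap m n A b μ β α x) (istaMap m n A b μ β α y) ≤ c * dist x y := by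
    intro x y
    rw [haux x, haux y]
    refine le_trans (shrink_lip n (α * μ * β)
      (mul_nonneg (mul_nonneg hα.le hμ.le) hβ0)
      (x - α • quadGrad m n A b σ x) (y - α • quadGrad m n A b σ y)) ?_
    rw [dist_eq_norm, dist_eq_norm, hdiff x y]
    exact key (x - y)
  have hlipR : LipschitzWith c.toNNReal (istaMap m n A b μ β α) :=
    LipschitzWith.of_dist_le_mul fun x y => by
      rw [Real.coe_toNNReal c hc0]; exact hd x y
  have hcontr : ContractingWith c.toNNReal (istaMap m n A b μ β α) :=
    ⟨Real.toNNReal_lt_one.mpr hc1, hlipR⟩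
  exact ⟨hlipR, hc1, hcontr.fixedPoint _, hcontr.fixedPoint_isFixedPt,
    fun y hy => hcontr.fixedPoint_unique hy,
    fun x0 => hcontr.tendsto_iterate_fixedPoint x0⟩
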